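/- Suppose additionally r̄ > 0, η > 0 and δ > 0. Then the bribe-compatibility condition η·(1 − c₅₄')·(r̄α+β)/(r̄α) < δ·(c₅₂ − c₅₂') + η·(c₅₄ − c₅₄') holds if and only if β·(η + (1−γ)δ) < r̄α·δ·(1−γ). In particular, the window of bribe fractions making BM-PAW simultaneously profitable for the attacker and the target pool is nonempty exactly under this explicit inequality in α, β, η, δ, γ, r̄. -/

import Mathlib

/-- The bribe-compatibility condition
`η·(1 − c₅₄')·(r̄α+β)/(r̄α) < δ·(c₅₂ − c₅₂') + η·(c₅₄ − c₅₄')` holds if and only if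
`β·(η + (1−γ)δ) < r̄α·δ·(1−γ)`. -/
theorem bmpaw_compatibility_condition_iff
    (α β η δ γ r₁ r₂ rbar : ℝ)
    (hα : 0 < α) (hβ : 0 < β) (hη0 : 0 ≤ η) (hsum : α + β + η < 1)
    (hδdef : δ = 1 - α - β - η)
    (hγ : γ ∈ Set.Icc (0:ℝ) 1)
    (hr₁ : r₁ ∈ Set.Icc (0:ℝ) 1) (hr₂ : r₂ ∈ Set.Icc (0:ℝ) 1)
    (hrbar : rbar ∈ Set.Icc (0:ℝ) 1)
    (hrbarpos : 0 < rbar) (hη : 0 < η) (hδ : 0 < δ)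
    (c52 c54 c52' c54' : ℝ)
    (hc52 : c52 = ((1 - r₂) * α + η + β + γ * δ) / (1 - r₂ * α))
    (hc54 : c54 = 1)
    (hc52' : c52' = ((1 - r₂) * α + β + γ * (δ + η)) / (1 - r₂ * α))
    (hc54' : c54' = ((1 - r₂) * α + β + γ * δ) / (1 - r₂ * α)) :
    (η * (1 - c54') * ((rbar * α + β) / (rbar * α))
        < δ * (c52 - c52') + η * (c54 - c54'))
      ↔ β * (η + (1 - γ) * δ) < rbar * α * δ * (1 - γ) := by
  have hD : 0 < 1 - r₂ * α := by
    nlinarith [hr₂.1, hr₂.2, mul_le_one₀ hr₂.2 hα.le (by linarith : α ≤ 1)]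
  have hra : 0 < rbar * α := mul_pos hrbarpos hα
  subst hc52 hc54 hc52' hc54' hδdef
  have e1 : η * (1 - ((1 - r₂) * α + β + γ * (1 - α - β - η)) / (1 - r₂ * α)) *
      ((rbar * α + β) / (rbar * α))
      = η * (η + (1 - γ) * (1 - α - β - η)) * (rbar * α + β) /
        ((1 - r₂ * α) * (rbar * α)) := by
    field_simp
    ring_nf
  have e2 : (1 - α - β - η) * (((1 - r₂) * α + η + β + γ * (1 - α - β - η)) / (1 - r₂ * α) -
        ((1 - r₂) * α + β + γ * ((1 - α - β - η) + η)) / (1 - r₂ * α)) +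
      η * (1 - ((1 - r₂) * α + β + γ * (1 - α - β - η)) / (1 - r₂ * α))
      = ((1 - α - β - η) * η * (1 - γ) + η * (η + (1 - γ) * (1 - α - β - η))) * (rbar * α) /
        ((1 - r₂ * α) * (rbar * α)) := by
    rw [div_sub_div_same, one_sub_div hD.ne', ← mul_div_assoc, ← mul_div_assoc, ← add_div,
      mul_div_mul_right _ _ hra.ne', div_left_inj' hD.ne']
    ring
  rw [e1, e2, div_lt_div_iff_of_pos_right (by positivity)]
  constructor <;> intro h <;> nlinarith [mul_pos hη hδ, hη, h]
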